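/- Suppose for all matrices W satisfying the update constraint: J(W_{t+1}, D_t) ≤ J(W_t, D_t), where J(W, D) = ‖H(XᵀW − F)‖_F² + λ Tr(Wᵀ D W) + α Tr(Wᵀ X L Xᵀ W) and D_t = diag(1/(2‖w_t^i‖₂)). Then the objective Φ(W) = ‖H(XᵀW − F)‖_F² + λ‖W‖_{2,1} + α Tr(Wᵀ X L Xᵀ W) satisfies Φ(W_{t+1}) ≤ Φ(W_t), i.e., the iterative reweighted algorithm monotonically decreases the ℓ_{2,1}-regularized objective. -/

import Mathlib

open Matrix BigOperators Finset

lemma trace_diag_quad {d c : ℕ} (f : Fin d → ℝ) (W : Matrix (Fin d) (Fin c) ℝ) :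
    Matrix.trace (Wᵀ * Matrix.diagonal f * W) =
      ∑ i : Fin d, f i * ∑ j : Fin c, (W i j) ^ 2 := by
  simp only [Matrix.trace, Matrix.diag, Matrix.mul_apply, Matrix.transpose_apply,
    Matrix.diagonal_apply]
  rw [Finset.sum_comm]
  refine Finset.sum_congr rfl fun i _ => ?_
  rw [Finset.mul_sum]
  refine Finset.sum_congr rfl fun j _ => ?_
  rw [Finset.sum_eq_single i]
  · simp [pow_two]; ring
  · exact fun b _ hb => by simp [hb]
  · simp

/-- Descent of the iterative reweighted algorithm: if the surrogate objective
`J(W, D) = ‖H(XᵀW − F)‖_F² + λ Tr(WᵀDW) + α Tr(WᵀXLXᵀW)` satisfies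
`J(W_{t+1}, D_t) ≤ J(W_t, D_t)` with `D_t = diag(1/(2‖w_t^i‖₂))`, then the
ℓ_{2,1}-regularized objective
`Φ(W) = ‖H(XᵀW − F)‖_F² + λ‖W‖_{2,1} + α Tr(WᵀXLXᵀW)` satisfies `Φ(W_{t+1}) ≤ Φ(W_t)`. -/
theorem reweighted_descent {n d c : ℕ} (hn : 0 < n)
    (X : Matrix (Fin d) (Fin n) ℝ) (F : Matrix (Fin n) (Fin c) ℝ)
    (H : Matrix (Fin n) (Fin n) ℝ)
    (hH : H = 1 - (1 / (n : ℝ)) • (Matrix.of fun _ _ => (1 : ℝ)))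
    (L : Matrix (Fin n) (Fin n) ℝ) (hL : L.PosSemidef)
    (lam alpha : ℝ) (hlam : 0 < lam) (halpha : 0 < alpha)
    (Wt Wt1 : Matrix (Fin d) (Fin c) ℝ)
    (hWt : ∀ i, ∃ j, Wt i j ≠ 0) (hWt1 : ∀ i, ∃ j, Wt1 i j ≠ 0)
    (Dt : Matrix (Fin d) (Fin d) ℝ)
    (hDt : Dt = Matrix.diagonal fun i =>
      1 / (2 * Real.sqrt (∑ j : Fin c, (Wt i j) ^ 2)))
    (hJ : (∑ i : Fin n, ∑ j : Fin c, ((H * (Xᵀ * Wt1 - F)) i j) ^ 2) +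
            lam * Matrix.trace (Wt1ᵀ * Dt * Wt1) +
            alpha * Matrix.trace (Wt1ᵀ * (X * L * Xᵀ) * Wt1) ≤
          (∑ i : Fin n, ∑ j : Fin c, ((H * (Xᵀ * Wt - F)) i j) ^ 2) +
            lam * Matrix.trace (Wtᵀ * Dt * Wt) +
            alpha * Matrix.trace (Wtᵀ * (X * L * Xᵀ) * Wt)) :
    (∑ i : Fin n, ∑ j : Fin c, ((H * (Xᵀ * Wt1 - F)) i j) ^ 2) +
        lam * (∑ i : Fin d, Real.sqrt (∑ j : Fin c, (Wt1 i j) ^ 2)) +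
        alpha * Matrix.trace (Wt1ᵀ * (X * L * Xᵀ) * Wt1) ≤
      (∑ i : Fin n, ∑ j : Fin c, ((H * (Xᵀ * Wt - F)) i j) ^ 2) +
        lam * (∑ i : Fin d, Real.sqrt (∑ j : Fin c, (Wt i j) ^ 2)) +
        alpha * Matrix.trace (Wtᵀ * (X * L * Xᵀ) * Wt) := by
  set f : Fin d → ℝ := fun i => 1 / (2 * Real.sqrt (∑ j : Fin c, (Wt i j) ^ 2)) with hf
  have hT1 : Matrix.trace (Wt1ᵀ * Dt * Wt1) =
      ∑ i : Fin d, f i * ∑ j : Fin c, (Wt1 i j) ^ 2 := by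
    rw [hDt]; exact trace_diag_quad _ _
  have hT0 : Matrix.trace (Wtᵀ * Dt * Wt) =
      ∑ i : Fin d, f i * ∑ j : Fin c, (Wt i j) ^ 2 := by
    rw [hDt]; exact trace_diag_quad _ _
  -- key per-row inequality, summed
  have key : (∑ i : Fin d, Real.sqrt (∑ j : Fin c, (Wt1 i j) ^ 2)) -
      (∑ i : Fin d, f i * ∑ j : Fin c, (Wt1 i j) ^ 2) ≤
      (∑ i : Fin d, Real.sqrt (∑ j : Fin c, (Wt i j) ^ 2)) -
      (∑ i : Fin d, f i * ∑ j : Fin c, (Wt i j) ^ 2) := by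
    rw [← Finset.sum_sub_distrib, ← Finset.sum_sub_distrib]
    refine Finset.sum_le_sum fun i _ => ?_
    set Sa := ∑ j : Fin c, (Wt i j) ^ 2 with hSa
    set Sb := ∑ j : Fin c, (Wt1 i j) ^ 2 with hSb
    have hSa0 : 0 < Sa := by
      obtain ⟨j, hj⟩ := hWt i
      have : 0 < (Wt i j) ^ 2 := by positivity
      exact lt_of_lt_of_le this (Finset.single_le_sum
        (fun k _ => sq_nonneg (Wt i k)) (Finset.mem_univ j))
    have hSb0 : 0 ≤ Sb := Finset.sum_nonneg fun k _ => sq_nonneg _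
    set a := Real.sqrt Sa with ha
    set b := Real.sqrt Sb with hb
    have ha0 : 0 < a := Real.sqrt_pos.mpr hSa0
    have hb0 : 0 ≤ b := Real.sqrt_nonneg _
    have haa : a ^ 2 = Sa := Real.sq_sqrt hSa0.le
    have hbb : b ^ 2 = Sb := Real.sq_sqrt hSb0
    have hfi : f i = 1 / (2 * a) := rfl
    rw [hfi, ← haa, ← hbb]
    have h2a : (0:ℝ) < 2 * a := by linarith
    rw [div_mul_eq_mul_div, div_mul_eq_mul_div, one_mul, one_mul,
      sub_div' h2a.ne', sub_div' h2a.ne',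
      div_le_div_iff₀ h2a h2a]
    nlinarith [sq_nonneg (a - b)]
  have hlam' := mul_le_mul_of_nonneg_left key hlam.le
  rw [mul_sub, mul_sub] at hlam'
  rw [hT1, hT0] at hJ
  linarith
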